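/- (Parametrization of the subroutine's privacy curve) Let r be a positive integer and σ > 0. Let W be distributed χ²_r, set Z_r = sqrt(r/W), and let G be a standard normal random variable independent of W. Let f = T( law(Z_r, G) ‖ law(Z_r, Z_r/σ + G) ) be the tradeoff function between the two joint laws on ℝ². Then f can be parametrized as f(α(t)) = β(t) for t ∈ ℝ, where α(t) = E[Φ(−tσ/Z_r − Z_r/(2σ))] and β(t) = E[Φ(tσ/Z_r − Z_r/(2σ))], with Φ the standard normal CDF. -/

import Mathlib

open MeasureTheory ProbabilityTheory
open scoped NNReal ENNReal Real

/-- The tradeoff function `T(P‖Q)(α) = inf {1 − ∫ φ dQ : φ measurable, 0 ≤ φ ≤ 1, ∫ φ dP ≤ α}`. -/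
noncomputable def tradeoff {Ω : Type*} [MeasurableSpace Ω] (P Q : Measure Ω) (α : ℝ) : ℝ :=
  sInf { b : ℝ | ∃ φ : Ω → ℝ, Measurable φ ∧ (∀ x, φ x ∈ Set.Icc (0 : ℝ) 1) ∧
    (∫ x, φ x ∂P) ≤ α ∧ b = 1 - ∫ x, φ x ∂Q }

/-- Standard Gaussian measure `N(0, I_d)` on `ℝ^d`, as the `d`-fold product of `N(0,1)`. -/
noncomputable def stdGaussianPi (d : ℕ) : Measure (Fin d → ℝ) :=
  Measure.pi fun _ => gaussianReal 0 1

/-- Chi-square distribution with `r` degrees of freedom (Gamma with shape `r/2`, rate `1/2`). -/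
noncomputable def chiSq (r : ℕ) : Measure ℝ := gammaMeasure (r / 2) (1 / 2)

/-- The standard normal CDF `Φ(x) = (1/√(2π)) ∫_{−∞}^x e^{−u²/2} du`. -/
noncomputable def stdGaussianCDF (x : ℝ) : ℝ :=
  (1 / Real.sqrt (2 * Real.pi)) * ∫ u in Set.Iic x, Real.exp (-u ^ 2 / 2)

namespace JLAux

lemma exp_sq_integrable : Integrable (fun u : ℝ => Real.exp (-u ^ 2 / 2)) := by
  have h := integrable_exp_neg_mul_sq (by norm_num : (0:ℝ) < 1/2)
  have he : (fun u : ℝ => Real.exp (-u ^ 2 / 2)) = fun u : ℝ => Real.exp (-(1/2) * u ^ 2) := by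
    funext u; congr 1; ring
  rw [he]; exact h

lemma pdf0_eq (x : ℝ) :
    gaussianPDFReal 0 1 x = (Real.sqrt (2 * Real.pi))⁻¹ * Real.exp (-x ^ 2 / 2) := by
  simp [gaussianPDFReal]

lemma pdf_ratio (m x : ℝ) :
    gaussianPDFReal m 1 x = gaussianPDFReal 0 1 x * Real.exp (m * x - m ^ 2 / 2) := by
  simp only [gaussianPDFReal, NNReal.coe_one, mul_one, sub_zero, mul_assoc, ← Real.exp_add]
  congr 1
  ring

lemma integral_gaussianReal (m : ℝ) (f : ℝ → ℝ) :
    ∫ x, f x ∂(gaussianReal m 1) = ∫ x, gaussianPDFReal m 1 x * f x := by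
  rw [gaussianReal_of_var_ne_zero m one_ne_zero]
  have h : (gaussianPDF m 1)
      = fun x => ((Real.toNNReal (gaussianPDFReal m 1 x) : ℝ≥0) : ℝ≥0∞) := rfl
  rw [h, integral_withDensity_eq_integral_smul
    (measurable_gaussianPDFReal m 1).real_toNNReal f]
  congr 1
  funext x
  simp [NNReal.smul_def, Real.coe_toNNReal _ (gaussianPDFReal_nonneg m 1 x)]

lemma integral_indicator_ge (c : ℝ) :
    ∫ g, (if c ≤ g then (1:ℝ) else 0) ∂(gaussianReal 0 1) = stdGaussianCDF (-c) := by
  rw [integral_gaussianReal]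
  have h1 : (fun x : ℝ => gaussianPDFReal 0 1 x * (if c ≤ x then (1:ℝ) else 0))
      = Set.indicator (Set.Ici c) (fun x => gaussianPDFReal 0 1 x) := by
    funext x
    rw [Set.indicator_apply]
    by_cases hx : c ≤ x <;> simp [hx, Set.mem_Ici]
  rw [h1, integral_indicator measurableSet_Ici, integral_Ici_eq_integral_Ioi]
  have h2 : ∫ x in Set.Ioi c, gaussianPDFReal 0 1 x
      = ∫ x in Set.Iic (-c), gaussianPDFReal 0 1 x := by
    rw [← integral_comp_neg_Ioi]
    refine setIntegral_congr_fun measurableSet_Ioi fun x _ => ?_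
    simp [pdf0_eq, neg_sq]
  rw [h2]
  simp_rw [pdf0_eq]
  rw [integral_const_mul]
  rw [stdGaussianCDF, one_div]

lemma cdf_neg (c : ℝ) : stdGaussianCDF (-c) = 1 - stdGaussianCDF c := by
  have hInt := exp_sq_integrable
  have htot : (∫ u : ℝ, Real.exp (-u ^ 2 / 2)) = Real.sqrt (2 * Real.pi) := by
    have h := integral_gaussian (1/2)
    rw [show Real.pi / (1/2) = 2 * Real.pi by ring] at h
    rw [← h]
    congr 1
    funext x
    congr 1
    ring
  have hrefl : (∫ u in Set.Ioi c, Real.exp (-u ^ 2 / 2))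
      = ∫ u in Set.Iic (-c), Real.exp (-u ^ 2 / 2) := by
    rw [← integral_comp_neg_Ioi]
    refine setIntegral_congr_fun measurableSet_Ioi fun x _ => ?_
    rw [neg_sq]
  have hsplit := intervalIntegral.integral_Iic_add_Ioi (b := c)
    hInt.integrableOn hInt.integrableOn
  rw [htot, hrefl] at hsplit
  have hpos : (0:ℝ) < Real.sqrt (2 * Real.pi) := Real.sqrt_pos.2 (by positivity)
  have hs' : (∫ u in Set.Iic (-c), Real.exp (-u ^ 2 / 2))
      = Real.sqrt (2 * Real.pi) - ∫ u in Set.Iic c, Real.exp (-u ^ 2 / 2) := by linarith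
  rw [stdGaussianCDF, stdGaussianCDF, hs', mul_sub, one_div, inv_mul_cancel₀ hpos.ne']

lemma integral_shift (m : ℝ) (f : ℝ → ℝ) (hf : AEStronglyMeasurable f (gaussianReal m 1)) :
    ∫ g, f (m + g) ∂(gaussianReal 0 1) = ∫ x, f x ∂(gaussianReal m 1) := by
  have hmap : (gaussianReal 0 1).map (fun g => m + g) = gaussianReal m 1 := by
    simpa using gaussianReal_map_const_add (μ := 0) (v := 1) m
  rw [← hmap] at hf ⊢
  rw [integral_map (measurable_const_add m).aemeasurable hf]

lemma NP_pointwise (t σ z : ℝ) (hσ : 0 < σ) (hz : 0 < z)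
    (f : ℝ → ℝ) (hf : Measurable f) (hb : ∀ x, f x ∈ Set.Icc (0:ℝ) 1) :
    (∫ g, f (z / σ + g) ∂(gaussianReal 0 1))
        - Real.exp t * ∫ g, f g ∂(gaussianReal 0 1)
      ≤ (∫ g, (if t * σ / z + z / (2 * σ) ≤ z / σ + g then (1:ℝ) else 0) ∂(gaussianReal 0 1))
        - Real.exp t * ∫ g, (if t * σ / z + z / (2 * σ) ≤ g then (1:ℝ) else 0)
            ∂(gaussianReal 0 1) := by
  have hm0 : 0 < z / σ := div_pos hz hσ
  set m : ℝ := z / σ with hm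
  set c : ℝ := t * σ / z + z / (2 * σ) with hc
  have hcm : c * m = t + m ^ 2 / 2 := by
    rw [hc, hm]
    field_simp
  set ind : ℝ → ℝ := fun x => if c ≤ x then (1:ℝ) else 0 with hind
  have hindm : Measurable ind :=
    Measurable.ite measurableSet_Ici measurable_const measurable_const
  have hindb : ∀ x, ind x ∈ Set.Icc (0:ℝ) 1 := by
    intro x; simp only [hind]; split <;> exact ⟨by norm_num, by norm_num⟩
  have conv1 : ∀ (u : ℝ → ℝ), Measurable u →
      (∫ g, u (m + g) ∂(gaussianReal 0 1)) = ∫ x, gaussianPDFReal m 1 x * u x := by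
    intro u hu
    rw [integral_shift m u hu.aestronglyMeasurable, integral_gaussianReal]
  have e1 := conv1 f hf
  have e3 := integral_gaussianReal 0 f
  have E2 : (∫ g, (if c ≤ m + g then (1:ℝ) else 0) ∂(gaussianReal 0 1))
      = ∫ x, gaussianPDFReal m 1 x * ind x := conv1 ind hindm
  have E4 : (∫ g, ind g ∂(gaussianReal 0 1))
      = ∫ x, gaussianPDFReal 0 1 x * ind x := integral_gaussianReal 0 ind
  have hbound : ∀ (mm : ℝ) (u : ℝ → ℝ), Measurable u → (∀ x, u x ∈ Set.Icc (0:ℝ) 1) →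
      Integrable (fun x => gaussianPDFReal mm 1 x * u x) := by
    intro mm u hu hub
    refine (integrable_gaussianPDFReal mm 1).mono'
      ((measurable_gaussianPDFReal mm 1).mul hu).aestronglyMeasurable
      (Filter.Eventually.of_forall fun x => ?_)
    rw [Real.norm_eq_abs, abs_mul, abs_of_nonneg (gaussianPDFReal_nonneg mm 1 x),
      abs_of_nonneg (hub x).1]
    exact mul_le_of_le_one_right (gaussianPDFReal_nonneg mm 1 x) (hub x).2
  have h1 := hbound m ind hindm hindb
  have h2 := hbound 0 ind hindm hindb
  have h3 := hbound m f hf hb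
  have h4 := hbound 0 f hf hb
  clear_value m c ind
  have hpt : ∀ x : ℝ,
      0 ≤ (ind x - f x) * (gaussianPDFReal m 1 x - Real.exp t * gaussianPDFReal 0 1 x) := by
    intro x
    have hratio : gaussianPDFReal m 1 x - Real.exp t * gaussianPDFReal 0 1 x
        = gaussianPDFReal 0 1 x * (Real.exp (m * x - m ^ 2 / 2) - Real.exp t) := by
      rw [pdf_ratio m x]; ring
    have hp0 : 0 ≤ gaussianPDFReal 0 1 x := gaussianPDFReal_nonneg 0 1 x
    rw [hratio]
    by_cases hx : c ≤ x
    · have hi : ind x = 1 := by rw [hind]; exact if_pos hx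
      have hexp : Real.exp t ≤ Real.exp (m * x - m ^ 2 / 2) := by
        apply Real.exp_le_exp.2
        nlinarith [mul_le_mul_of_nonneg_right hx hm0.le]
      rw [hi]
      exact mul_nonneg (by linarith [(hb x).2]) (mul_nonneg hp0 (by linarith))
    · have hi : ind x = 0 := by rw [hind]; exact if_neg hx
      push_neg at hx
      have hexp : Real.exp (m * x - m ^ 2 / 2) ≤ Real.exp t := by
        apply Real.exp_le_exp.2
        nlinarith [mul_le_mul_of_nonneg_right hx.le hm0.le]
      rw [hi]
      have hneg : gaussianPDFReal 0 1 x * (Real.exp (m * x - m ^ 2 / 2) - Real.exp t) ≤ 0 :=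
        mul_nonpos_iff.mpr (Or.inl ⟨hp0, by linarith⟩)
      nlinarith [mul_nonneg (neg_nonneg.mpr hneg) (hb x).1]
  have hineq : (0:ℝ) ≤ ∫ x : ℝ,
      (ind x - f x) * (gaussianPDFReal m 1 x - Real.exp t * gaussianPDFReal 0 1 x) :=
    integral_nonneg hpt
  have hexpand : (fun x => (ind x - f x)
        * (gaussianPDFReal m 1 x - Real.exp t * gaussianPDFReal 0 1 x))
      = fun x => (gaussianPDFReal m 1 x * ind x - Real.exp t * (gaussianPDFReal 0 1 x * ind x))
        - (gaussianPDFReal m 1 x * f x - Real.exp t * (gaussianPDFReal 0 1 x * f x)) := by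
    funext x; ring
  rw [hexpand] at hineq
  have hA : Integrable (fun x => gaussianPDFReal m 1 x * ind x
      - Real.exp t * (gaussianPDFReal 0 1 x * ind x)) := h1.sub (h2.const_mul _)
  have hB : Integrable (fun x => gaussianPDFReal m 1 x * f x
      - Real.exp t * (gaussianPDFReal 0 1 x * f x)) := h3.sub (h4.const_mul _)
  rw [integral_sub hA hB, integral_sub h1 (h2.const_mul _), integral_sub h3 (h4.const_mul _),
    integral_const_mul, integral_const_mul] at hineq
  rw [e1, e3, E2,
    show integral (gaussianReal 0 1) ind = ∫ x, gaussianPDFReal 0 1 x * ind x from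
      integral_gaussianReal 0 ind]
  linarith

theorem tradeoff_param (χ : Measure ℝ) [IsProbabilityMeasure χ] (s : ℝ → ℝ)
    (hs : Measurable s) (hae : ∀ᵐ w ∂χ, 0 < s w) (σ t : ℝ) (hσ : 0 < σ) :
    tradeoff ((χ.prod (gaussianReal 0 1)).map (fun p => (s p.1, p.2)))
      ((χ.prod (gaussianReal 0 1)).map (fun p => (s p.1, s p.1 / σ + p.2)))
      (∫ w, stdGaussianCDF (-(t * σ / s w) - s w / (2 * σ)) ∂χ)
      = ∫ w, stdGaussianCDF (t * σ / s w - s w / (2 * σ)) ∂χ := by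
  set γ : Measure ℝ := gaussianReal 0 1 with hγ
  set F : ℝ × ℝ → ℝ × ℝ := fun p => (s p.1, p.2) with hF
  set F' : ℝ × ℝ → ℝ × ℝ := fun p => (s p.1, s p.1 / σ + p.2) with hF'
  set A : ℝ := ∫ w, stdGaussianCDF (-(t * σ / s w) - s w / (2 * σ)) ∂χ with hA
  set B : ℝ := ∫ w, stdGaussianCDF (t * σ / s w - s w / (2 * σ)) ∂χ with hB
  set φt : ℝ × ℝ → ℝ := fun p => if t * σ / p.1 + p.1 / (2 * σ) ≤ p.2 then 1 else 0 with hφt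
  have hFm : Measurable F := (hs.comp measurable_fst).prodMk measurable_snd
  have hF'm : Measurable F' := (hs.comp measurable_fst).prodMk
    (((hs.comp measurable_fst).div_const σ).add measurable_snd)
  have hφtm : Measurable φt := by
    refine Measurable.ite ?_ measurable_const measurable_const
    exact measurableSet_le ((measurable_const.div measurable_fst).add
      (measurable_fst.div_const _)) measurable_snd
  have hφtb : ∀ x, φt x ∈ Set.Icc (0:ℝ) 1 := by
    intro x; simp only [hφt]; split <;> exact ⟨by norm_num, by norm_num⟩
  have hred : ∀ (G : ℝ × ℝ → ℝ × ℝ), Measurable G → ∀ φ : ℝ × ℝ → ℝ, Measurable φ →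
      (∀ x, φ x ∈ Set.Icc (0:ℝ) 1) →
      Integrable (fun p : ℝ × ℝ => φ (G p)) (χ.prod γ) ∧
      ∫ x, φ x ∂((χ.prod γ).map G) = ∫ w, ∫ g, φ (G (w, g)) ∂γ ∂χ := by
    intro G hG φ hφ hbd
    have hint : Integrable (fun p : ℝ × ℝ => φ (G p)) (χ.prod γ) := by
      refine Integrable.mono' (integrable_const 1) (hφ.comp hG).aestronglyMeasurable
        (Filter.Eventually.of_forall fun p => ?_)
      rw [Real.norm_eq_abs, abs_le]
      exact ⟨by linarith [(hbd (G p)).1], (hbd (G p)).2⟩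
    refine ⟨hint, ?_⟩
    rw [integral_map hG.aemeasurable hφ.aestronglyMeasurable]
    exact integral_prod _ hint
  have hαw : ∀ w : ℝ, (∫ g, φt (s w, g) ∂γ)
      = stdGaussianCDF (-(t * σ / s w) - s w / (2 * σ)) := by
    intro w
    have h := integral_indicator_ge (t * σ / s w + s w / (2 * σ))
    rw [← hγ] at h
    rw [show -(t * σ / s w) - s w / (2 * σ) = -(t * σ / s w + s w / (2 * σ)) by ring]
    exact h
  have hβw : ∀ w : ℝ, (∫ g, φt (s w, s w / σ + g) ∂γ)
      = 1 - stdGaussianCDF (t * σ / s w - s w / (2 * σ)) := by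
    intro w
    have h2 : s w / σ = s w / (2 * σ) + s w / (2 * σ) := by
      field_simp
      ring
    have hcongr : (∫ g, φt (s w, s w / σ + g) ∂γ)
        = ∫ g, (if t * σ / s w + s w / (2 * σ) - s w / σ ≤ g then (1:ℝ) else 0) ∂γ := by
      refine integral_congr_ae (Filter.Eventually.of_forall fun g => ?_)
      simp only [hφt]
      exact if_congr (Iff.symm sub_le_iff_le_add') rfl rfl
    rw [hcongr]
    have h := integral_indicator_ge (t * σ / s w + s w / (2 * σ) - s w / σ)
    rw [← hγ] at h
    rw [h, show -(t * σ / s w + s w / (2 * σ) - s w / σ)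
        = -(t * σ / s w - s w / (2 * σ)) by linarith, cdf_neg]
  obtain ⟨hintP, hPeq⟩ := hred F hFm φt hφtm hφtb
  obtain ⟨hintQ, hQeq⟩ := hred F' hF'm φt hφtm hφtb
  have hPφt : ∫ x, φt x ∂((χ.prod γ).map F) = A := by
    rw [hPeq, hA]
    exact integral_congr_ae (Filter.Eventually.of_forall fun w => hαw w)
  have hBint : Integrable (fun w => 1 - stdGaussianCDF (t * σ / s w - s w / (2 * σ))) χ :=
    (hintQ.integral_prod_left).congr (Filter.Eventually.of_forall fun w => hβw w)
  have hBint' : Integrable (fun w => stdGaussianCDF (t * σ / s w - s w / (2 * σ))) χ :=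
    ((integrable_const (1:ℝ)).sub hBint).congr
      (Filter.Eventually.of_forall fun w => by simp only [Pi.sub_apply]; ring)
  have hQφt : ∫ x, φt x ∂((χ.prod γ).map F') = 1 - B := by
    rw [hQeq]
    have h := integral_congr_ae (μ := χ)
      (Filter.Eventually.of_forall fun w => hβw w)
    rw [h, integral_sub (integrable_const 1) hBint', integral_const, probReal_univ]
    simp [hB]
  have hNP : ∀ φ : ℝ × ℝ → ℝ, Measurable φ → (∀ x, φ x ∈ Set.Icc (0:ℝ) 1) →
      (∫ x, φ x ∂((χ.prod γ).map F')) - Real.exp t * (∫ x, φ x ∂((χ.prod γ).map F))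
        ≤ (∫ x, φt x ∂((χ.prod γ).map F'))
          - Real.exp t * (∫ x, φt x ∂((χ.prod γ).map F)) := by
    intro φ hφ hbd
    obtain ⟨hiP, hPe⟩ := hred F hFm φ hφ hbd
    obtain ⟨hiQ, hQe⟩ := hred F' hF'm φ hφ hbd
    rw [hPe, hQe, hPeq, hQeq]
    have hiP' := hiP.integral_prod_left
    have hiQ' := hiQ.integral_prod_left
    have hiPt' := hintP.integral_prod_left
    have hiQt' := hintQ.integral_prod_left
    rw [← integral_const_mul, ← integral_const_mul,
      ← integral_sub hiQ' (hiP'.const_mul _), ← integral_sub hiQt' (hiPt'.const_mul _)]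
    refine integral_mono_ae (hiQ'.sub (hiP'.const_mul _)) (hiQt'.sub (hiPt'.const_mul _)) ?_
    filter_upwards [hae] with w hw
    exact NP_pointwise t σ (s w) hσ hw (fun x => φ (s w, x))
      (hφ.comp (measurable_const.prodMk measurable_id)) (fun x => hbd _)
  have hmemB : B ∈ {b : ℝ | ∃ φ : ℝ × ℝ → ℝ, Measurable φ ∧
      (∀ x, φ x ∈ Set.Icc (0 : ℝ) 1) ∧
      (∫ x, φ x ∂((χ.prod γ).map F)) ≤ A ∧ b = 1 - ∫ x, φ x ∂((χ.prod γ).map F')} :=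
    ⟨φt, hφtm, hφtb, le_of_eq hPφt, by rw [hQφt]; ring⟩
  have hlb : B ∈ lowerBounds {b : ℝ | ∃ φ : ℝ × ℝ → ℝ, Measurable φ ∧
      (∀ x, φ x ∈ Set.Icc (0 : ℝ) 1) ∧
      (∫ x, φ x ∂((χ.prod γ).map F)) ≤ A ∧ b = 1 - ∫ x, φ x ∂((χ.prod γ).map F')} := by
    rintro b ⟨φ, hφ, hbd, hle, rfl⟩
    have h := hNP φ hφ hbd
    rw [hPφt, hQφt] at h
    have h2 : Real.exp t * (∫ x, φ x ∂((χ.prod γ).map F)) ≤ Real.exp t * A :=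
      mul_le_mul_of_nonneg_left hle (Real.exp_pos t).le
    linarith
  unfold tradeoff
  exact le_antisymm (csInf_le ⟨B, hlb⟩ hmemB) (le_csInf ⟨B, hmemB⟩ hlb)

end JLAux

/-- Parametrization of the subroutine's privacy curve: with `W ~ χ²_r`,
`Z_r = sqrt(r/W)`, `G ~ N(0,1)` independent of `W`, the tradeoff function
`f = T(law(Z_r, G) ‖ law(Z_r, Z_r/σ + G))` satisfies `f(α(t)) = β(t)` where
`α(t) = E[Φ(−tσ/Z_r − Z_r/(2σ))]` and `β(t) = E[Φ(tσ/Z_r − Z_r/(2σ))]`. -/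
theorem jl_privacy_curve_parametrization (r : ℕ) (hr : 0 < r) (σ : ℝ) (hσ : 0 < σ) :
    ∀ t : ℝ,
      tradeoff
          (((chiSq r).prod (gaussianReal 0 1)).map
            (fun p => (Real.sqrt (r / p.1), p.2)))
          (((chiSq r).prod (gaussianReal 0 1)).map
            (fun p => (Real.sqrt (r / p.1), Real.sqrt (r / p.1) / σ + p.2)))
          (∫ w, stdGaussianCDF (-(t * σ / Real.sqrt (r / w)) - Real.sqrt (r / w) / (2 * σ))
            ∂(chiSq r))
        = ∫ w, stdGaussianCDF (t * σ / Real.sqrt (r / w) - Real.sqrt (r / w) / (2 * σ))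
            ∂(chiSq r) := by
  intro t
  have hrpos : (0:ℝ) < (r:ℝ) := Nat.cast_pos.mpr hr
  haveI hprob : IsProbabilityMeasure (chiSq r) :=
    isProbabilityMeasure_gammaMeasure (div_pos hrpos two_pos) (by norm_num)
  have haew : ∀ᵐ w ∂(chiSq r), 0 < w := by
    rw [ae_iff]
    have hset : {w : ℝ | ¬ 0 < w} = Set.Iic 0 := by ext w; simp [not_lt]
    rw [hset]
    show gammaMeasure ((r:ℝ) / 2) (1 / 2) (Set.Iic 0) = 0
    rw [gammaMeasure, withDensity_apply _ measurableSet_Iic]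
    have hne : ∀ᵐ w : ℝ, w ≠ 0 := by
      rw [ae_iff]
      simpa using Real.volume_singleton (a := 0)
    have h0 : ∀ᵐ w ∂(volume.restrict (Set.Iic 0)), gammaPDF ((r:ℝ)/2) (1/2) w = 0 := by
      filter_upwards [ae_restrict_mem measurableSet_Iic, ae_restrict_of_ae hne] with w hw1 hw2
      exact gammaPDF_of_neg (lt_of_le_of_ne hw1 hw2)
    rw [lintegral_congr_ae h0, lintegral_zero]
  have haes : ∀ᵐ w ∂(chiSq r), 0 < Real.sqrt ((r:ℝ) / w) :=
    haew.mono fun w hw => Real.sqrt_pos.2 (div_pos hrpos hw)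
  exact JLAux.tradeoff_param (chiSq r) (fun w => Real.sqrt ((r:ℝ) / w))
    ((measurable_const.div measurable_id).sqrt) haes σ t hσ
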